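/- arXiv:1711.09056 — 3 statements merged into one kernel-verified Lean document; each statement's English description precedes it below -/
import Mathlib

section
/- Let d ≥ 1 and n be natural numbers. Suppose Δ : Fin n → MvPolynomial (Fin n) ℂ is a tuple of polynomials each with zero constant coefficient such that the n×n matrix of linear coefficients (whose (i,j) entry is the coefficient of X_j in Δ i) is invertible. Then there exists a tuple Δ' : Fin n → MvPolynomial (Fin n) ℂ, each component with zero constant coefficient, such that for every i, both aeval Δ' (Δ i) - X_i and aeval Δ (Δ' i) - X_i lie in m_n^(d+1), where m_n is the ideal generated by the variables. In other words, every d-jet with invertible linear part has a compositional inverse modulo terms of degree greater than d, so that Diff_d^n = {Δ ∈ J_d^{n,n} : Lin Δ invertible} is a group under truncated composition. -/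
open MvPolynomial

/-- The ideal of `MvPolynomial (Fin n) ℂ` generated by the variables. -/
noncomputable def varIdeal (n : ℕ) : Ideal (MvPolynomial (Fin n) ℂ) :=
  Ideal.span (Set.range (X : Fin n → MvPolynomial (Fin n) ℂ))

/-- The linear part of a jet: the matrix whose `(i, j)` entry is the coefficient of
`X j` in the `i`-th component. -/
noncomputable def linearPart {n k : ℕ} (Ψ : Fin k → MvPolynomial (Fin n) ℂ) :
    Matrix (Fin k) (Fin n) ℂ :=
  Matrix.of fun i j => coeff (Finsupp.single j 1) (Ψ i)

namespace JetAux

/-- degree of a multi-index -/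
def mdeg {n : ℕ} (s : Fin n →₀ ℕ) : ℕ := s.sum fun _ e => e

lemma le_mdeg {n : ℕ} (s : Fin n →₀ ℕ) (l : Fin n) : s l ≤ mdeg s := by
  by_cases h : s l = 0
  · simp [h]
  · exact Finset.single_le_sum (fun _ _ => Nat.zero_le _) (Finsupp.mem_support_iff.mpr h)

lemma mdeg_eq_zero {n : ℕ} {s : Fin n →₀ ℕ} (h : mdeg s = 0) : s = 0 := by
  ext l
  have := le_mdeg s l
  simp only [Finsupp.coe_zero, Pi.zero_apply]
  omega

lemma constantCoeff_eq_zero_of_mem {n : ℕ} {p : MvPolynomial (Fin n) ℂ}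
    (hp : p ∈ varIdeal n) : constantCoeff p = 0 := by
  have h : varIdeal n ≤ RingHom.ker (constantCoeff (R := ℂ) (σ := Fin n)) := by
    rw [varIdeal, Ideal.span_le]
    rintro _ ⟨i, rfl⟩
    simp [RingHom.mem_ker]
  exact h hp

lemma monomial_one_mem {n : ℕ} (s : Fin n →₀ ℕ) :
    (monomial s (1 : ℂ)) ∈ varIdeal n ^ (mdeg s) := by
  induction s using Finsupp.induction with
  | zero => simp [mdeg, Ideal.one_eq_top]
  | single_add a b f ha hb ih =>
    have hm : (monomial (Finsupp.single a b + f) (1 : ℂ)) =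
        X a ^ b * monomial f 1 := by
      rw [X_pow_eq_monomial, monomial_mul, one_mul]
    have hdeg : mdeg (Finsupp.single a b + f) = b + mdeg f := by
      unfold mdeg
      rw [Finsupp.sum_add_index' (fun _ => rfl) (fun _ _ _ => rfl),
        Finsupp.sum_single_index rfl]
    rw [hm, hdeg, pow_add]
    exact Ideal.mul_mem_mul
      (Ideal.pow_mem_pow (Ideal.subset_span (Set.mem_range_self a)) b) ih

lemma mem_pow_of_coeff {n k : ℕ} {p : MvPolynomial (Fin n) ℂ}
    (h : ∀ s : Fin n →₀ ℕ, mdeg s < k → coeff s p = 0) :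
    p ∈ varIdeal n ^ k := by
  rw [p.as_sum]
  apply Ideal.sum_mem
  intro s hs
  have hks : k ≤ mdeg s := by
    by_contra hlt
    exact (mem_support_iff.mp hs) (h s (by omega))
  have : (monomial s (coeff s p)) = C (coeff s p) * monomial s 1 := by
    rw [C_mul_monomial, mul_one]
  rw [this]
  exact Ideal.mul_mem_left _ _ (Ideal.pow_le_pow_right hks (monomial_one_mem s))

lemma mem_of_constantCoeff {n : ℕ} {p : MvPolynomial (Fin n) ℂ}
    (hp : constantCoeff p = 0) : p ∈ varIdeal n := by
  have := mem_pow_of_coeff (k := 1) (p := p) ?_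
  · simpa using this
  · intro s hs
    have : s = 0 := mdeg_eq_zero (by omega)
    subst this
    exact hp

lemma aeval_mem_pow {n k : ℕ} {Φ : Fin n → MvPolynomial (Fin n) ℂ}
    (hΦ : ∀ j, constantCoeff (Φ j) = 0) {p : MvPolynomial (Fin n) ℂ}
    (hp : p ∈ varIdeal n ^ k) : aeval Φ p ∈ varIdeal n ^ k := by
  have h1 : Ideal.map (↑(aeval Φ : MvPolynomial (Fin n) ℂ →ₐ[ℂ] MvPolynomial (Fin n) ℂ) :
      MvPolynomial (Fin n) ℂ →+* MvPolynomial (Fin n) ℂ) (varIdeal n) ≤ varIdeal n := by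
    rw [varIdeal, Ideal.map_span]
    apply Ideal.span_le.mpr
    rintro _ ⟨_, ⟨i, rfl⟩, rfl⟩
    simpa [varIdeal] using mem_of_constantCoeff (hΦ i)
  have h2 := Ideal.mem_map_of_mem
    (↑(aeval Φ : MvPolynomial (Fin n) ℂ →ₐ[ℂ] MvPolynomial (Fin n) ℂ) :
      MvPolynomial (Fin n) ℂ →+* MvPolynomial (Fin n) ℂ) hp
  rw [Ideal.map_pow] at h2
  exact Ideal.pow_right_mono h1 k h2

lemma pderiv_mem_of_sq {n : ℕ} {p : MvPolynomial (Fin n) ℂ}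
    (hp : p ∈ varIdeal n * varIdeal n) (l : Fin n) :
    pderiv l p ∈ varIdeal n := by
  refine Submodule.mul_induction_on hp ?_ ?_
  · intro r hr s hs
    rw [pderiv_mul]
    exact add_mem (Ideal.mul_mem_left _ _ hs) (Ideal.mul_mem_right _ _ hr)
  · intro x y hx hy
    rw [map_add]
    exact add_mem hx hy

lemma constantCoeff_pderiv {n : ℕ} (l : Fin n) (p : MvPolynomial (Fin n) ℂ) :
    constantCoeff (pderiv l p) = coeff (Finsupp.single l 1) p := by
  induction p using MvPolynomial.induction_on' with
  | monomial s a =>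
    rw [pderiv_monomial, constantCoeff_monomial, coeff_monomial]
    by_cases hs : s = Finsupp.single l 1
    · subst hs; simp
    · rw [if_neg hs]
      by_cases hl : s l = 0
      · simp [hl]
      · rw [if_neg]
        intro hzero
        apply hs
        have hle : s ≤ Finsupp.single l 1 := by
          rwa [tsub_eq_zero_iff_le] at hzero
        ext b
        by_cases hb : b = l
        · subst hb
          have := hle b
          simp only [Finsupp.single_eq_same] at this ⊢
          omega
        · have := hle b
          simp only [Finsupp.single_eq_of_ne' (Ne.symm hb)] at this ⊢
          omega
  | add p q hp hq => rw [map_add, map_add, hp, hq, coeff_add]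

lemma linear_coeff_eq_zero_of_mem_sq {n : ℕ} {p : MvPolynomial (Fin n) ℂ}
    (hp : p ∈ varIdeal n ^ 2) (l : Fin n) :
    coeff (Finsupp.single l 1) p = 0 := by
  rw [← constantCoeff_pderiv]
  exact constantCoeff_eq_zero_of_mem (pderiv_mem_of_sq (by rw [← pow_two]; exact hp) l)

lemma aeval_sub_mem_span {n : ℕ} (Φ ε : Fin n → MvPolynomial (Fin n) ℂ)
    (p : MvPolynomial (Fin n) ℂ) :
    aeval (fun j => Φ j + ε j) p - aeval Φ p ∈ Ideal.span (Set.range ε) := by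
  induction p using MvPolynomial.induction_on with
  | C a => simp
  | add p q hp hq =>
    rw [map_add, map_add]
    have : aeval (fun j => Φ j + ε j) p + aeval (fun j => Φ j + ε j) q
        - (aeval Φ p + aeval Φ q)
        = (aeval (fun j => Φ j + ε j) p - aeval Φ p)
          + (aeval (fun j => Φ j + ε j) q - aeval Φ q) := by ring
    rw [this]
    exact add_mem hp hq
  | mul_X p j hp =>
    rw [map_mul, map_mul, aeval_X, aeval_X]
    have : aeval (fun j => Φ j + ε j) p * (Φ j + ε j) - aeval Φ p * Φ j
        = (aeval (fun j => Φ j + ε j) p - aeval Φ p) * Φ j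
          + aeval (fun j => Φ j + ε j) p * ε j := by ring
    rw [this]
    exact add_mem (Ideal.mul_mem_right _ _ hp)
      (Ideal.mul_mem_left _ _ (Ideal.subset_span ⟨j, rfl⟩))

lemma taylor {n : ℕ} (Φ ε : Fin n → MvPolynomial (Fin n) ℂ)
    (p : MvPolynomial (Fin n) ℂ) :
    aeval (fun j => Φ j + ε j) p - aeval Φ p
      - ∑ j, ε j * aeval Φ (pderiv j p) ∈ (Ideal.span (Set.range ε)) ^ 2 := by
  induction p using MvPolynomial.induction_on with
  | C a => simp
  | add p q hp hq =>
    have : aeval (fun j => Φ j + ε j) (p + q) - aeval Φ (p + q)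
        - ∑ j, ε j * aeval Φ (pderiv j (p + q))
        = (aeval (fun j => Φ j + ε j) p - aeval Φ p
            - ∑ j, ε j * aeval Φ (pderiv j p))
          + (aeval (fun j => Φ j + ε j) q - aeval Φ q
            - ∑ j, ε j * aeval Φ (pderiv j q)) := by
      simp only [map_add, Finset.sum_add_distrib, mul_add]
      ring
    rw [this]
    exact add_mem hp hq
  | mul_X p j hp =>
    have key : ∀ l, aeval Φ (pderiv l (p * X j))
        = aeval Φ (pderiv l p) * Φ j + (if l = j then aeval Φ p else 0) := by
      intro l
      rw [pderiv_mul, pderiv_X]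
      by_cases hlj : l = j
      · subst hlj
        simp [Pi.single_eq_same]
      · simp [Pi.single_eq_of_ne hlj, hlj]
    have hsum : ∑ l, ε l * aeval Φ (pderiv l (p * X j))
        = (∑ l, ε l * aeval Φ (pderiv l p)) * Φ j + ε j * aeval Φ p := by
      simp only [key, mul_add, Finset.sum_add_distrib, Finset.mul_sum]
      congr 1
      · rw [Finset.sum_mul]
        exact Finset.sum_congr rfl fun l _ => by ring
      · rw [Finset.sum_eq_single j]
        · simp
        · intro b _ hb; simp [hb]
        · simp
    rw [map_mul, map_mul, aeval_X, aeval_X, hsum]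
    have expand : aeval (fun j => Φ j + ε j) p * (Φ j + ε j) - aeval Φ p * Φ j
        - ((∑ l, ε l * aeval Φ (pderiv l p)) * Φ j + ε j * aeval Φ p)
        = (aeval (fun j => Φ j + ε j) p - aeval Φ p
            - ∑ l, ε l * aeval Φ (pderiv l p)) * Φ j
          + (aeval (fun j => Φ j + ε j) p - aeval Φ p) * ε j := by ring
    rw [expand]
    refine add_mem (Ideal.mul_mem_right _ _ hp) ?_
    rw [sq]
    exact Ideal.mul_mem_mul (aeval_sub_mem_span Φ ε p)
      (Ideal.subset_span ⟨j, rfl⟩)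

end JetAux

namespace JetAux

lemma mdeg_classify {n : ℕ} {s : Fin n →₀ ℕ} (h : mdeg s < 2) :
    s = 0 ∨ ∃ l, s = Finsupp.single l 1 := by
  by_cases h0 : s = 0
  · exact Or.inl h0
  · right
    obtain ⟨l, hl⟩ := Finsupp.support_nonempty_iff.mpr h0
    refine ⟨l, ?_⟩
    ext b
    by_cases hb : b = l
    · subst hb
      have h1 : 1 ≤ s b := Nat.one_le_iff_ne_zero.mpr (Finsupp.mem_support_iff.mp hl)
      have h2 := le_mdeg s b
      simp only [Finsupp.single_eq_same]
      omega
    · simp only [Finsupp.single_eq_of_ne' (Ne.symm hb)]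
      by_contra hsb
      have hbs : b ∈ s.support := Finsupp.mem_support_iff.mpr hsb
      have hsub : ({l, b} : Finset (Fin n)) ⊆ s.support := by
        intro x hx
        simp only [Finset.mem_insert, Finset.mem_singleton] at hx
        rcases hx with rfl | rfl <;> assumption
      have hsum : s l + s b ≤ mdeg s := by
        have h3 := Finset.sum_le_sum_of_subset (f := fun x => s x) hsub
        rwa [Finset.sum_pair (fun h => hb h.symm)] at h3
      have h1 : 1 ≤ s l := Nat.one_le_iff_ne_zero.mpr (Finsupp.mem_support_iff.mp hl)
      omega

lemma decomp_mem_sq {n : ℕ} (p : MvPolynomial (Fin n) ℂ)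
    (hp0 : constantCoeff p = 0) :
    p - ∑ m, C (coeff (Finsupp.single m 1) p) * X m ∈ varIdeal n ^ 2 := by
  classical
  have hcoeff : ∀ t : Fin n →₀ ℕ,
      coeff t (∑ m, C (coeff (Finsupp.single m 1) p) * X m)
        = ∑ m, coeff (Finsupp.single m 1) p
            * (if Finsupp.single m 1 = t then 1 else 0) := by
    intro t
    rw [coeff_sum]
    exact Finset.sum_congr rfl fun m _ => by rw [coeff_C_mul, coeff_X']
  apply mem_pow_of_coeff
  intro s hs
  rcases mdeg_classify hs with rfl | ⟨l, rfl⟩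
  · rw [coeff_sub, hcoeff]
    have : ∀ m : Fin n, (Finsupp.single m 1 = (0 : Fin n →₀ ℕ)) = False := by
      intro m
      simp [Finsupp.single_eq_zero]
    simp only [this, if_false, mul_zero, Finset.sum_const_zero]
    have h' : coeff 0 p = 0 := hp0
    simp [h']
  · rw [coeff_sub, hcoeff]
    have heq : ∀ m : Fin n,
        (Finsupp.single m 1 = Finsupp.single l (1:ℕ)) ↔ m = l :=
      fun m => Finsupp.single_left_inj one_ne_zero
    have : ∑ m, coeff (Finsupp.single m 1) p
        * (if Finsupp.single m 1 = Finsupp.single l (1:ℕ) then 1 else 0)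
        = coeff (Finsupp.single l 1) p := by
      simp only [heq, mul_ite, mul_one, mul_zero]
      rw [Finset.sum_ite_eq' Finset.univ l (fun m => coeff (Finsupp.single m 1) p)]
      simp
    rw [this, sub_self]

lemma aeval_mem {n : ℕ} {Φ : Fin n → MvPolynomial (Fin n) ℂ}
    (hΦ : ∀ j, constantCoeff (Φ j) = 0) {p : MvPolynomial (Fin n) ℂ}
    (hp : constantCoeff p = 0) : constantCoeff (aeval Φ p) = 0 := by
  apply constantCoeff_eq_zero_of_mem
  have := aeval_mem_pow (k := 1) hΦ (by rw [pow_one]; exact mem_of_constantCoeff hp)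
  rwa [pow_one] at this

end JetAux

namespace JetAux

lemma constantCoeff_aeval' {n : ℕ} {Φ : Fin n → MvPolynomial (Fin n) ℂ}
    (hΦ0 : ∀ j, constantCoeff (Φ j) = 0) (q : MvPolynomial (Fin n) ℂ) :
    constantCoeff (aeval Φ q) = constantCoeff q := by
  have hq : aeval Φ q = C (constantCoeff q) + aeval Φ (q - C (constantCoeff q)) := by
    rw [map_sub, aeval_C, algebraMap_eq]
    ring
  rw [hq, map_add, constantCoeff_C, aeval_mem hΦ0 (by rw [map_sub, constantCoeff_C, sub_self]),
    add_zero]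

lemma right_inverse_exists {d n : ℕ} (hd : 1 ≤ d)
    (Δ : Fin n → MvPolynomial (Fin n) ℂ)
    (hΔ0 : ∀ i, constantCoeff (Δ i) = 0)
    (hΔlin : IsUnit (linearPart Δ)) :
    ∃ Δ' : Fin n → MvPolynomial (Fin n) ℂ,
      (∀ j, constantCoeff (Δ' j) = 0) ∧
      (∀ j l, coeff (Finsupp.single l 1) (Δ' j)
        = (↑hΔlin.unit⁻¹ : Matrix (Fin n) (Fin n) ℂ) j l) ∧
      (∀ i, aeval Δ' (Δ i) - X i ∈ varIdeal n ^ (d + 1)) := by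
  classical
  set A : Matrix (Fin n) (Fin n) ℂ := linearPart Δ with hA
  set B : Matrix (Fin n) (Fin n) ℂ := (↑hΔlin.unit⁻¹ : Matrix (Fin n) (Fin n) ℂ) with hB
  have hAB : A * B = 1 := by
    have := hΔlin.unit.mul_inv
    rwa [IsUnit.unit_spec] at this
  have hAcoeff : ∀ i j, A i j = coeff (Finsupp.single j 1) (Δ i) := fun i j => rfl
  suffices h : ∀ k : ℕ, 1 ≤ k → ∃ Φ : Fin n → MvPolynomial (Fin n) ℂ,
      (∀ j, constantCoeff (Φ j) = 0) ∧
      (∀ j l, coeff (Finsupp.single l 1) (Φ j) = B j l) ∧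
      (∀ i, aeval Φ (Δ i) - X i ∈ varIdeal n ^ (k + 1)) by
    exact h d hd
  intro k hk
  induction k, hk using Nat.le_induction with
  | base =>
    set Φ : Fin n → MvPolynomial (Fin n) ℂ := fun j => ∑ l, C (B j l) * X l with hΦdef
    have hΦ0 : ∀ j, constantCoeff (Φ j) = 0 := by intro j; simp [hΦdef]
    have hΦlin : ∀ j l, coeff (Finsupp.single l 1) (Φ j) = B j l := by
      intro j l
      rw [hΦdef]
      rw [coeff_sum]
      have hterm : ∀ m, coeff (Finsupp.single l 1) (C (B j m) * X m)
          = if m = l then B j m else 0 := by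
        intro m
        rw [coeff_C_mul, coeff_X']
        by_cases hm : m = l
        · subst hm; simp
        · rw [if_neg (fun h => hm ((Finsupp.single_left_inj one_ne_zero).mp h)),
            if_neg hm, mul_zero]
      simp only [hterm]
      simp
    have hABX : ∀ i, ∑ m, C (A i m) * Φ m = (X i : MvPolynomial (Fin n) ℂ) := by
      intro i
      have h1 : ∑ m, C (A i m) * Φ m = ∑ l, C ((A * B) i l) * X l := by
        simp only [hΦdef, Finset.mul_sum]
        rw [Finset.sum_comm]
        refine Finset.sum_congr rfl fun l _ => ?_
        rw [Matrix.mul_apply, map_sum, Finset.sum_mul]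
        refine Finset.sum_congr rfl fun m _ => ?_
        rw [map_mul, mul_assoc]
      rw [h1, hAB]
      simp [Matrix.one_apply, apply_ite C, ite_mul]
    refine ⟨Φ, hΦ0, hΦlin, fun i => ?_⟩
    have hdec := decomp_mem_sq (Δ i) (hΔ0 i)
    have hkey : aeval Φ (Δ i) - X i
        = aeval Φ (Δ i - ∑ m, C (coeff (Finsupp.single m 1) (Δ i)) * X m) := by
      rw [map_sub, map_sum]
      have h1 : ∀ m, aeval Φ (C (coeff (Finsupp.single m 1) (Δ i)) * X m)
          = C (A i m) * Φ m := by
        intro m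
        rw [map_mul, aeval_X, aeval_C, ← hAcoeff]
        rfl
      simp only [h1]
      rw [hABX]
    rw [hkey]
    exact aeval_mem_pow (k := 2) hΦ0 hdec
  | succ k hk ih =>
    obtain ⟨Φ, hΦ0, hΦlin, hΦerr⟩ := ih
    set E : Fin n → MvPolynomial (Fin n) ℂ := fun i => aeval Φ (Δ i) - X i with hEdef
    have hE : ∀ i, E i ∈ varIdeal n ^ (k + 1) := hΦerr
    set ε : Fin n → MvPolynomial (Fin n) ℂ := fun j => -∑ l, C (B j l) * E l with hεdef
    have hε : ∀ j, ε j ∈ varIdeal n ^ (k + 1) := by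
      intro j
      refine neg_mem (Ideal.sum_mem _ fun l _ => Ideal.mul_mem_left _ _ (hE l))
    have hεsq : ∀ j, ε j ∈ varIdeal n ^ 2 := by
      intro j
      exact Ideal.pow_le_pow_right (by omega) (hε j)
    have hε0 : ∀ j, constantCoeff (ε j) = 0 := by
      intro j
      apply constantCoeff_eq_zero_of_mem
      have := Ideal.pow_le_pow_right (I := varIdeal n) (Nat.one_le_iff_ne_zero.mpr (by omega)) (hε j)
      rwa [pow_one] at this
    refine ⟨fun j => Φ j + ε j, ?_, ?_, ?_⟩
    · intro j
      rw [map_add, hΦ0, hε0, add_zero]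
    · intro j l
      rw [coeff_add, hΦlin, linear_coeff_eq_zero_of_mem_sq (hεsq j), add_zero]
    · intro i
      -- Taylor expansion
      have hT := taylor Φ ε (Δ i)
      have hTmem : aeval (fun j => Φ j + ε j) (Δ i) - aeval Φ (Δ i)
          - ∑ j, ε j * aeval Φ (pderiv j (Δ i)) ∈ varIdeal n ^ (k + 1 + 1) := by
        have hle : Ideal.span (Set.range ε) ≤ varIdeal n ^ (k + 1) := by
          rw [Ideal.span_le]
          rintro _ ⟨j, rfl⟩
          exact hε j
        have h2 : (Ideal.span (Set.range ε)) ^ 2 ≤ (varIdeal n ^ (k + 1)) ^ 2 :=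
          Ideal.pow_right_mono hle 2
        have h3 : (varIdeal n ^ (k + 1)) ^ 2 = varIdeal n ^ ((k + 1) * 2) := by
          rw [← pow_mul]
        have h4 : varIdeal n ^ ((k + 1) * 2) ≤ varIdeal n ^ (k + 1 + 1) :=
          Ideal.pow_le_pow_right (by omega)
        exact h4 (h3 ▸ h2 hT)
      -- the derivative decomposition
      have hG : ∀ j, aeval Φ (pderiv j (Δ i)) - C (A i j) ∈ varIdeal n := by
        intro j
        apply mem_of_constantCoeff
        rw [map_sub, constantCoeff_C]
        rw [constantCoeff_aeval' hΦ0, constantCoeff_pderiv, ← hAcoeff, sub_self]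
      have hcancel : ∑ j, ε j * C (A i j) = -E i := by
        have step1 : ∀ j, ε j * C (A i j) = -∑ l, C (A i j) * C (B j l) * E l := by
          intro j
          rw [hεdef]
          simp only [neg_mul, Finset.sum_mul, neg_inj]
          exact Finset.sum_congr rfl fun l _ => by ring
        rw [Finset.sum_congr rfl fun j _ => step1 j, Finset.sum_neg_distrib, neg_inj,
          Finset.sum_comm]
        have inner : ∀ l, ∑ j, C (A i j) * C (B j l) * E l = C ((A * B) i l) * E l := by
          intro l
          rw [Matrix.mul_apply, map_sum, Finset.sum_mul]
          exact Finset.sum_congr rfl fun j _ => by rw [map_mul]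
        rw [Finset.sum_congr rfl fun l _ => inner l, hAB]
        simp [Matrix.one_apply, apply_ite C, ite_mul]
      have hsplit : aeval (fun j => Φ j + ε j) (Δ i) - X i
          = (aeval (fun j => Φ j + ε j) (Δ i) - aeval Φ (Δ i)
              - ∑ j, ε j * aeval Φ (pderiv j (Δ i)))
            + ∑ j, ε j * (aeval Φ (pderiv j (Δ i)) - C (A i j))
            + (∑ j, ε j * C (A i j) + E i) := by
        have h1 : ∑ j, ε j * aeval Φ (pderiv j (Δ i))
            = ∑ j, ε j * (aeval Φ (pderiv j (Δ i)) - C (A i j))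
              + ∑ j, ε j * C (A i j) := by
          rw [← Finset.sum_add_distrib]
          exact Finset.sum_congr rfl fun j _ => by ring
        rw [h1]
        simp only [hEdef]
        ring
      have h0 : ∑ j, ε j * C (A i j) + E i = 0 := by rw [hcancel]; ring
      rw [hsplit, h0, add_zero]
      refine add_mem hTmem (Ideal.sum_mem _ fun j _ => ?_)
      rw [pow_succ]
      exact Ideal.mul_mem_mul (hε j) (hG j)

end JetAux

open JetAux

/-- Every `d`-jet with invertible linear part has a compositional inverse modulo
terms of degree greater than `d`; hence `Diff_d^n` is a group under truncated
composition. -/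
theorem jet_with_invertible_linear_part_has_inverse (d n : ℕ) (hd : 1 ≤ d)
    (Δ : Fin n → MvPolynomial (Fin n) ℂ)
    (hΔ0 : ∀ i, constantCoeff (Δ i) = 0)
    (hΔlin : IsUnit (linearPart Δ)) :
    ∃ Δ' : Fin n → MvPolynomial (Fin n) ℂ,
      (∀ i, constantCoeff (Δ' i) = 0) ∧
      (∀ i, aeval Δ' (Δ i) - X i ∈ varIdeal n ^ (d + 1)) ∧
      (∀ i, aeval Δ (Δ' i) - X i ∈ varIdeal n ^ (d + 1)) := by
  classical
  obtain ⟨Δ', h0', hlin', herr'⟩ := right_inverse_exists hd Δ hΔ0 hΔlin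
  have hBunit : IsUnit (linearPart Δ') := by
    have : linearPart Δ' = (↑hΔlin.unit⁻¹ : Matrix (Fin n) (Fin n) ℂ) := by
      ext j l
      exact hlin' j l
    rw [this]
    exact (hΔlin.unit⁻¹).isUnit
  obtain ⟨Δ'', h0'', _, herr''⟩ := right_inverse_exists hd Δ' h0' hBunit
  refine ⟨Δ', h0', herr', ?_⟩
  set M : Ideal (MvPolynomial (Fin n) ℂ) := varIdeal n ^ (d + 1) with hM
  have span_le_M : ∀ f : Fin n → MvPolynomial (Fin n) ℂ,
      (∀ j, f j ∈ M) → Ideal.span (Set.range f) ≤ M := by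
    intro f hf
    rw [Ideal.span_le]
    rintro _ ⟨j, rfl⟩
    exact hf j
  have stepA : ∀ i, aeval Δ'' (aeval Δ' (Δ i)) - Δ i ∈ M := by
    intro i
    rw [comp_aeval_apply]
    have hfun : (fun j => X j + (aeval Δ'' (Δ' j) - X j))
        = fun j => aeval Δ'' (Δ' j) := by
      funext j; ring
    have h := aeval_sub_mem_span X (fun j => aeval Δ'' (Δ' j) - X j) (Δ i)
    rw [hfun, aeval_X_left_apply] at h
    exact span_le_M _ (fun j => herr'' j) h
  have stepB : ∀ i, aeval Δ'' (aeval Δ' (Δ i)) - Δ'' i ∈ M := by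
    intro i
    have heq : aeval Δ'' (aeval Δ' (Δ i)) - Δ'' i
        = aeval Δ'' (aeval Δ' (Δ i) - X i) := by
      rw [map_sub, aeval_X]
    rw [heq]
    exact aeval_mem_pow h0'' (herr' i)
  have hdiff : ∀ i, Δ i - Δ'' i ∈ M := by
    intro i
    have h := sub_mem (stepB i) (stepA i)
    have heq : aeval Δ'' (aeval Δ' (Δ i)) - Δ'' i
        - (aeval Δ'' (aeval Δ' (Δ i)) - Δ i) = Δ i - Δ'' i := by ring
    rwa [heq] at h
  intro i
  have hsplit : aeval Δ (Δ' i) - X i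
      = (aeval Δ (Δ' i) - aeval Δ'' (Δ' i)) + (aeval Δ'' (Δ' i) - X i) := by ring
  rw [hsplit]
  refine add_mem ?_ (herr'' i)
  have h := aeval_sub_mem_span Δ'' (fun j => Δ j - Δ'' j) (Δ' i)
  have hfun : (fun j => Δ'' j + (Δ j - Δ'' j)) = Δ := by
    funext j; ring
  rw [hfun] at h
  exact span_le_M _ (fun j => hdiff j) h
end

section
/- Let d, n, k be natural numbers. Let Ψ : Fin k → MvPolynomial (Fin n) ℂ be a tuple of polynomials with zero constant coefficient, let Δ : Fin n → MvPolynomial (Fin n) ℂ be a tuple with zero constant coefficients and invertible matrix of linear coefficients, and let Δ' : Fin k → MvPolynomial (Fin k) ℂ be a tuple with zero constant coefficients and invertible matrix of linear coefficients. Define the left-right transformed tuple Ψ'' : Fin k → MvPolynomial (Fin n) ℂ by Ψ'' j = aeval (fun i => aeval Δ (Ψ i)) (Δ' j) (i.e. first reparametrize the source by Δ, then the target by Δ'). Then the quotient rings MvPolynomial (Fin n) ℂ / (Ideal.span (Set.range Ψ) ⊔ m_n^(d+1)) and MvPolynomial (Fin n) ℂ / (Ideal.span (Set.range Ψ'') ⊔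 m_n^(d+1)) are isomorphic as ℂ-algebras. In particular, the local algebra A_Ψ is invariant under the left-right action of Diff_d^n × Diff_d^k on map-jets, so each contact singularity Θ_A = {Ψ : A_Ψ ≅ A} is a left-right invariant subset of J_d^{n,k}. -/
open MvPolynomial

noncomputable def mIdeal (σ : Type*) : Ideal (MvPolynomial σ ℂ) :=
  Ideal.span (Set.range (X : σ → MvPolynomial σ ℂ))

variable {σ τ : Type*}

lemma prod_X_pow_mem (t : Finset σ) (g : σ → ℕ) :
    (∏ i ∈ t, (X i : MvPolynomial σ ℂ) ^ g i) ∈ mIdeal σ ^ (∑ i ∈ t, g i) := by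
  classical
  induction t using Finset.induction with
  | empty => simp
  | @insert a t h ih =>
    rw [Finset.prod_insert h, Finset.sum_insert h, pow_add]
    have hX : (X a : MvPolynomial σ ℂ) ∈ mIdeal σ := Ideal.subset_span ⟨a, rfl⟩
    exact Ideal.mul_mem_mul (Ideal.pow_mem_pow hX _) ih

lemma mem_pow_of_degree (r : ℕ) (p : MvPolynomial σ ℂ)
    (h : ∀ s ∈ p.support, r ≤ s.sum fun _ e => e) : p ∈ mIdeal σ ^ r := by
  rw [← p.support_sum_monomial_coeff]
  apply Ideal.sum_mem
  intro s hs
  rw [monomial_eq]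
  apply Ideal.mul_mem_left
  refine Ideal.pow_le_pow_right (h s hs) ?_
  simpa [Finsupp.prod, Finsupp.sum] using prod_X_pow_mem s.support s

lemma small_degree (s : σ →₀ ℕ) (h : (s.sum fun _ e => e) ≤ 1) :
    s = 0 ∨ ∃ j, s = Finsupp.single j 1 := by
  classical
  rw [Finsupp.sum] at h
  by_cases h0 : s = 0
  · exact Or.inl h0
  right
  obtain ⟨j, hj⟩ : s.support.Nonempty := Finsupp.support_nonempty_iff.mpr h0
  have hj0 : 1 ≤ s j := Nat.one_le_iff_ne_zero.mpr (Finsupp.mem_support_iff.mp hj)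
  have hsum : s j + ∑ x ∈ s.support.erase j, s x = ∑ x ∈ s.support, s x :=
    Finset.add_sum_erase _ (fun i => s i) hj
  refine ⟨j, ?_⟩
  ext i
  rw [Finsupp.single_apply]
  rcases eq_or_ne i j with rfl | hij
  · rw [if_pos rfl]; omega
  · rw [if_neg (Ne.symm hij)]
    by_contra hi
    have hi' : i ∈ s.support.erase j :=
      Finset.mem_erase.mpr ⟨hij, Finsupp.mem_support_iff.mpr hi⟩
    have h2 : s i ≤ ∑ x ∈ s.support.erase j, s x :=
      Finset.single_le_sum (fun _ _ => Nat.zero_le _) hi'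
    omega

lemma mem_m_of_constantCoeff {p : MvPolynomial σ ℂ} (h : constantCoeff p = 0) :
    p ∈ mIdeal σ := by
  have := mem_pow_of_degree 1 p ?_
  · simpa using this
  · intro s hs
    by_contra hr
    rcases small_degree s (by omega) with rfl | ⟨j, rfl⟩
    · exact Finsupp.mem_support_iff.mp hs (by rw [constantCoeff_eq] at h; exact h)
    · simp [Finsupp.sum_single_index] at hr

lemma aeval_mem_pow {g : σ → MvPolynomial τ ℂ} {I : Ideal (MvPolynomial τ ℂ)}
    (hg : ∀ i, g i ∈ I) {r : ℕ} {p : MvPolynomial σ ℂ} (hp : p ∈ mIdeal σ ^ r) :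
    aeval g p ∈ I ^ r := by
  have h1 := Ideal.mem_map_of_mem ((aeval g : MvPolynomial σ ℂ →ₐ[ℂ] MvPolynomial τ ℂ) : MvPolynomial σ ℂ →+* MvPolynomial τ ℂ) hp
  rw [Ideal.map_pow] at h1
  refine Ideal.pow_right_mono ?_ r h1
  rw [mIdeal, Ideal.map_span]
  rw [Ideal.span_le]
  rintro q ⟨-, ⟨i, rfl⟩, rfl⟩
  simpa using hg i

lemma aeval_span_range {m : ℕ} {g : σ → MvPolynomial τ ℂ} (Φ : Fin m → MvPolynomial σ ℂ)
    {p : MvPolynomial σ ℂ} (hp : p ∈ Ideal.span (Set.range Φ)) :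
    aeval g p ∈ Ideal.span (Set.range fun i => aeval g (Φ i)) := by
  have h1 := Ideal.mem_map_of_mem ((aeval g : MvPolynomial σ ℂ →ₐ[ℂ] MvPolynomial τ ℂ) : MvPolynomial σ ℂ →+* MvPolynomial τ ℂ) hp
  rw [Ideal.map_span, ← Set.range_comp] at h1
  exact h1

lemma aeval_sub_aeval_mem {g g' : σ → MvPolynomial σ ℂ} {J : Ideal (MvPolynomial σ ℂ)}
    (h : ∀ i, g i - g' i ∈ J) (p : MvPolynomial σ ℂ) : aeval g p - aeval g' p ∈ J := by
  induction p using MvPolynomial.induction_on with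
  | C a => simp
  | add p q hp hq =>
    have := J.add_mem hp hq
    rw [map_add, map_add]
    convert this using 1
    ring
  | mul_X p i hp =>
    rw [map_mul, map_mul, aeval_X, aeval_X]
    have : aeval g p * g i - aeval g' p * g' i
        = aeval g p * (g i - g' i) + (aeval g p - aeval g' p) * g' i := by ring
    rw [this]
    exact J.add_mem (J.mul_mem_left _ (h i)) (J.mul_mem_right _ hp)

lemma m_sq_le {σ : Type*} : mIdeal σ ^ 2 ≤ mIdeal σ := Ideal.pow_le_self two_ne_zero

lemma mem_m_of_sub_sq {σ : Type*} {q : MvPolynomial σ ℂ} {i : σ}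
    (h : q - X i ∈ mIdeal σ ^ 2) : q ∈ mIdeal σ := by
  have : q = (q - X i) + X i := by ring
  rw [this]
  exact (mIdeal σ).add_mem (m_sq_le h) (Ideal.subset_span ⟨i, rfl⟩)

lemma aeval_perturb {σ : Type*} {Δ : σ → MvPolynomial σ ℂ}
    (h2 : ∀ i, Δ i - X i ∈ mIdeal σ ^ 2) :
    ∀ (r : ℕ) (q : MvPolynomial σ ℂ), q ∈ mIdeal σ ^ r →
      aeval Δ q - q ∈ mIdeal σ ^ (r + 1) := by
  have hD : ∀ q : MvPolynomial σ ℂ, aeval Δ q - q ∈ mIdeal σ ^ 2 := by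
    intro q
    have := aeval_sub_aeval_mem (g := Δ) (g' := X) (J := mIdeal σ ^ 2) h2 q
    rwa [aeval_X_left_apply] at this
  have hΔm : ∀ i, Δ i ∈ mIdeal σ := fun i => mem_m_of_sub_sq (h2 i)
  intro r
  induction r with
  | zero =>
    intro q _
    have h12 : mIdeal σ ^ 2 ≤ mIdeal σ ^ 1 := Ideal.pow_le_pow_right one_le_two
    simpa using h12 (hD q)
  | succ r ih =>
    intro q hq
    rw [pow_succ] at hq
    refine Submodule.mul_induction_on hq (fun a ha b hb => ?_) (fun x y hx hy => ?_)
    ·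
      have key : aeval Δ (a * b) - a * b
          = (aeval Δ a - a) * aeval Δ b + a * (aeval Δ b - b) := by
        rw [map_mul]; ring
      rw [key]
      have h1 : (aeval Δ a - a) * aeval Δ b ∈ mIdeal σ ^ (r + 1 + 1) := by
        rw [pow_succ]
        have hb1 : aeval Δ b ∈ mIdeal σ := by
          have := aeval_mem_pow (I := mIdeal σ) (r := 1) hΔm (p := b) (by simpa using hb)
          simpa using this
        exact Ideal.mul_mem_mul (ih a ha) hb1
      have h2' : a * (aeval Δ b - b) ∈ mIdeal σ ^ (r + 1 + 1) := by
        have : mIdeal σ ^ r * mIdeal σ ^ 2 ≤ mIdeal σ ^ (r + 1 + 1) := by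
          rw [← pow_add]
        exact this (Ideal.mul_mem_mul ha (hD b))
      exact Ideal.add_mem _ h1 h2'
    · have := Ideal.add_mem _ hx hy
      convert this using 1
      rw [map_add]; ring

lemma exists_left_inverse_jet {σ : Type*} {Δ : σ → MvPolynomial σ ℂ}
    (h2 : ∀ i, Δ i - X i ∈ mIdeal σ ^ 2) (N : ℕ) :
    ∃ Γ : σ → MvPolynomial σ ℂ, (∀ i, Γ i - X i ∈ mIdeal σ ^ 2) ∧
      ∀ i, aeval Δ (Γ i) - X i ∈ mIdeal σ ^ N := by
  suffices h : ∀ M : ℕ, ∃ Γ : σ → MvPolynomial σ ℂ, (∀ i, Γ i - X i ∈ mIdeal σ ^ 2) ∧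
      ∀ i, aeval Δ (Γ i) - X i ∈ mIdeal σ ^ (M + 2) by
    obtain ⟨Γ, hΓ, he⟩ := h N
    exact ⟨Γ, hΓ, fun i => Ideal.pow_le_pow_right (by omega) (he i)⟩
  intro M
  induction M with
  | zero =>
    refine ⟨X, by simp, fun i => ?_⟩
    rw [aeval_X]
    exact h2 i
  | succ M ih =>
    obtain ⟨Γ, hΓ, he⟩ := ih
    refine ⟨fun i => Γ i - (aeval Δ (Γ i) - X i), fun i => ?_, fun i => ?_⟩
    · have h1 : (Γ i - (aeval Δ (Γ i) - X i)) - X i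
          = (Γ i - X i) - (aeval Δ (Γ i) - X i) := by ring
      rw [h1]
      exact Ideal.sub_mem _ (hΓ i) (Ideal.pow_le_pow_right (by omega) (he i))
    · have h1 : aeval Δ (Γ i - (aeval Δ (Γ i) - X i)) - X i
          = -(aeval Δ (aeval Δ (Γ i) - X i) - (aeval Δ (Γ i) - X i)) := by
        rw [map_sub]; ring
      rw [h1]
      exact neg_mem (aeval_perturb h2 (M + 2) _ (he i))

lemma exists_two_sided_inverse_jet {σ : Type*} {Δ : σ → MvPolynomial σ ℂ}
    (h2 : ∀ i, Δ i - X i ∈ mIdeal σ ^ 2) (N : ℕ) :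
    ∃ Γ : σ → MvPolynomial σ ℂ, (∀ i, Γ i - X i ∈ mIdeal σ ^ 2) ∧
      (∀ i, aeval Δ (Γ i) - X i ∈ mIdeal σ ^ N) ∧
      (∀ i, aeval Γ (Δ i) - X i ∈ mIdeal σ ^ N) := by
  obtain ⟨Γ, hΓ, he⟩ := exists_left_inverse_jet h2 N
  obtain ⟨Γ', hΓ', hu⟩ := exists_left_inverse_jet hΓ N
  have hΓm : ∀ i, Γ i ∈ mIdeal σ := fun i => mem_m_of_sub_sq (hΓ i)
  have hΔm : ∀ i, Δ i ∈ mIdeal σ := fun i => mem_m_of_sub_sq (h2 i)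
  refine ⟨Γ, hΓ, he, fun i => ?_⟩
  -- v l := aeval Γ (Δ l) is the composite Δ then Γ  (as functions, Δ ∘ Γ pointwise)
  set v : σ → MvPolynomial σ ℂ := fun l => aeval Γ (Δ l) with hv
  have hvm : ∀ l, v l ∈ mIdeal σ := fun l =>
    (by simpa [v] using aeval_mem_pow (r := 1) (I := mIdeal σ) hΓm (by simpa using hΔm l))
  -- T := aeval (fun j => aeval Γ (aeval Δ (Γ j))) (Γ' i)
  set w : σ → MvPolynomial σ ℂ := fun j => aeval Γ (aeval Δ (Γ j)) with hw
  set T : MvPolynomial σ ℂ := aeval w (Γ' i) with hT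
  -- Estimate 1 : T - X i ∈ m ^ N
  have hTX : T - X i ∈ mIdeal σ ^ N := by
    have hwi : ∀ j, w j - Γ j ∈ mIdeal σ ^ N := by
      intro j
      have : w j - Γ j = aeval Γ (aeval Δ (Γ j) - X j) := by
        rw [map_sub, aeval_X]
      rw [this]
      exact aeval_mem_pow (I := mIdeal σ) hΓm (he j)
    have h1 : T - aeval Γ (Γ' i) ∈ mIdeal σ ^ N :=
      aeval_sub_aeval_mem (J := mIdeal σ ^ N) hwi (Γ' i)
    have h2' : aeval Γ (Γ' i) - X i ∈ mIdeal σ ^ N := hu i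
    have : T - X i = (T - aeval Γ (Γ' i)) + (aeval Γ (Γ' i) - X i) := by ring
    rw [this]
    exact Ideal.add_mem _ h1 h2'
  -- Estimate 2 : T = aeval v (aeval Γ (Γ' i))
  have hWeq : w = fun j => aeval v (Γ j) := by
    funext j
    rw [hw]
    exact comp_aeval_apply _ _ _
  have hT2 : T = aeval v (aeval Γ (Γ' i)) := by
    rw [hT, hWeq]
    exact (comp_aeval_apply _ _ _).symm
  have hfinal : aeval v (aeval Γ (Γ' i)) - v i ∈ mIdeal σ ^ N := by
    have : aeval v (aeval Γ (Γ' i)) - v i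
        = aeval v (aeval Γ (Γ' i) - X i) := by rw [map_sub, aeval_X]
    rw [this]
    exact aeval_mem_pow (I := mIdeal σ) hvm (hu i)
  have : aeval Γ (Δ i) - X i = (T - X i) - (aeval v (aeval Γ (Γ' i)) - v i) := by
    rw [← hT2]; ring
  rw [this]
  exact Ideal.sub_mem _ hTX hfinal

lemma varIdeal_eq (n : ℕ) : varIdeal n = mIdeal (Fin n) := rfl

lemma matrix_smul_sum {n : ℕ} {V : Type*} [AddCommMonoid V] [Module ℂ V]
    (M Minv : Matrix (Fin n) (Fin n) ℂ) (hMM : M * Minv = 1)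
    (v : Fin n → V) (i : Fin n) :
    ∑ j, M i j • ∑ l, Minv j l • v l = v i := by
  simp_rw [Finset.smul_sum, smul_smul]
  rw [Finset.sum_comm]
  simp_rw [← Finset.sum_smul, ← Matrix.mul_apply, hMM]
  simp [Matrix.one_apply]

lemma exists_full_inverse_jet {n : ℕ} {Δ : Fin n → MvPolynomial (Fin n) ℂ}
    (h0 : ∀ i, constantCoeff (Δ i) = 0) (hlin : IsUnit (linearPart Δ)) (N : ℕ) :
    ∃ Γ : Fin n → MvPolynomial (Fin n) ℂ, (∀ i, Γ i ∈ mIdeal (Fin n)) ∧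
      (∀ i, aeval Δ (Γ i) - X i ∈ mIdeal (Fin n) ^ N) ∧
      (∀ i, aeval Γ (Δ i) - X i ∈ mIdeal (Fin n) ^ N) := by
  classical
  set M := linearPart Δ with hM
  have hdet : IsUnit M.det := (Matrix.isUnit_iff_isUnit_det M).mp hlin
  have hMM : M * M⁻¹ = 1 := Matrix.mul_nonsing_inv M hdet
  have hMM' : M⁻¹ * M = 1 := Matrix.nonsing_inv_mul M hdet
  set Δ₁ : Fin n → MvPolynomial (Fin n) ℂ := fun i => ∑ j, M⁻¹ i j • Δ j with hΔ₁
  have hcoeffΔ : ∀ j l, coeff (Finsupp.single l 1) (Δ j) = M j l := fun j l => rfl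
  have hcoeff0Δ : ∀ j, coeff (0 : Fin n →₀ ℕ) (Δ j) = 0 := by
    intro j
    rw [← constantCoeff_eq]
    exact h0 j
  have h₁ : ∀ i, Δ₁ i - X i ∈ mIdeal (Fin n) ^ 2 := by
    intro i
    apply mem_pow_of_degree
    intro s hs
    by_contra hr
    apply MvPolynomial.mem_support_iff.mp hs
    rcases small_degree s (by omega) with rfl | ⟨l, rfl⟩
    · rw [coeff_sub, coeff_zero_X, hΔ₁, coeff_sum]
      simp [coeff_smul, hcoeff0Δ]
    · rw [coeff_sub, coeff_X', hΔ₁, coeff_sum]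
      simp only [coeff_smul, hcoeffΔ, smul_eq_mul]
      rw [← Matrix.mul_apply, hMM', Matrix.one_apply]
      by_cases hil : i = l
      · subst hil; simp
      · rw [if_neg hil, if_neg (fun h => hil ((Finsupp.single_left_inj one_ne_zero).mp h))]
        ring
  obtain ⟨Γ₁, hΓ₁, he₁, hw₁⟩ := exists_two_sided_inverse_jet h₁ N
  set ℓinv : Fin n → MvPolynomial (Fin n) ℂ := fun j => ∑ l, M⁻¹ j l • X l with hℓ
  have hℓm : ∀ j, ℓinv j ∈ mIdeal (Fin n) := by
    intro j
    exact Ideal.sum_mem _ fun l _ =>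
      Submodule.smul_of_tower_mem _ _ (Ideal.subset_span ⟨l, rfl⟩)
  have hℓΔ : (fun j => aeval Δ (ℓinv j)) = Δ₁ := by
    funext j
    rw [hℓ, hΔ₁]
    simp [map_sum]
  have hΓ₁m : ∀ l, Γ₁ l ∈ mIdeal (Fin n) := fun l => mem_m_of_sub_sq (hΓ₁ l)
  refine ⟨fun i => aeval ℓinv (Γ₁ i), fun i => ?_, fun i => ?_, fun i => ?_⟩
  · have := aeval_mem_pow (r := 1) (I := mIdeal (Fin n)) hℓm (p := Γ₁ i)
      (by simpa using hΓ₁m i)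
    simpa using this
  · rw [comp_aeval_apply, hℓΔ]
    exact he₁ i
  · have hΔeq : Δ i = ∑ j, M i j • Δ₁ j := by
      rw [hΔ₁]
      exact (matrix_smul_sum M M⁻¹ hMM Δ i).symm
    have hterm : ∀ j, aeval (fun l => aeval ℓinv (Γ₁ l)) (Δ₁ j)
        = ℓinv j + aeval ℓinv (aeval Γ₁ (Δ₁ j) - X j) := by
      intro j
      rw [← comp_aeval_apply, map_sub, aeval_X]
      ring
    rw [hΔeq, map_sum]
    simp_rw [map_smul, hterm, smul_add, Finset.sum_add_distrib]
    have hXi : ∑ j, M i j • ℓinv j = X i := by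
      rw [hℓ]
      exact matrix_smul_sum M M⁻¹ hMM (fun l => (X l : MvPolynomial (Fin n) ℂ)) i
    rw [hXi]
    have : X i + (∑ j, M i j • aeval ℓinv (aeval Γ₁ (Δ₁ j) - X j)) - X i
        = ∑ j, M i j • aeval ℓinv (aeval Γ₁ (Δ₁ j) - X j) := by ring
    rw [this]
    exact Ideal.sum_mem _ fun j _ => Submodule.smul_of_tower_mem _ _
      (aeval_mem_pow (I := mIdeal (Fin n)) hℓm (hw₁ j))

lemma aeval_id_sub_mem {n : ℕ} {g : Fin n → MvPolynomial (Fin n) ℂ} {N : ℕ}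
    (hg : ∀ i, g i - X i ∈ mIdeal (Fin n) ^ N) (p : MvPolynomial (Fin n) ℂ) :
    aeval g p - p ∈ mIdeal (Fin n) ^ N := by
  have := aeval_sub_aeval_mem (g := g) (g' := X) (J := mIdeal (Fin n) ^ N) hg p
  rwa [aeval_X_left_apply] at this

lemma source_quot_iso {n k d : ℕ} (Ψ : Fin k → MvPolynomial (Fin n) ℂ)
    (hΨ : ∀ i, Ψ i ∈ mIdeal (Fin n))
    {Δ : Fin n → MvPolynomial (Fin n) ℂ}
    (h0 : ∀ i, constantCoeff (Δ i) = 0) (hlin : IsUnit (linearPart Δ)) :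
    Nonempty ((MvPolynomial (Fin n) ℂ ⧸ (Ideal.span (Set.range Ψ) ⊔ mIdeal (Fin n) ^ (d+1)))
      ≃ₐ[ℂ] (MvPolynomial (Fin n) ℂ ⧸
        (Ideal.span (Set.range fun i => aeval Δ (Ψ i)) ⊔ mIdeal (Fin n) ^ (d+1)))) := by
  obtain ⟨Γ, hΓm, hΔΓ, hΓΔ⟩ := exists_full_inverse_jet h0 hlin (d+1)
  have hΔm : ∀ i, Δ i ∈ mIdeal (Fin n) := fun i => mem_m_of_constantCoeff (h0 i)
  set I1 := Ideal.span (Set.range Ψ) ⊔ mIdeal (Fin n) ^ (d+1) with hI1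
  set I2 := Ideal.span (Set.range fun i => aeval Δ (Ψ i)) ⊔ mIdeal (Fin n) ^ (d+1) with hI2
  have hGF : ∀ p, aeval Γ (aeval Δ p) - p ∈ mIdeal (Fin n) ^ (d+1) := by
    intro p
    rw [comp_aeval_apply]
    exact aeval_id_sub_mem hΓΔ p
  have hFG : ∀ p, aeval Δ (aeval Γ p) - p ∈ mIdeal (Fin n) ^ (d+1) := by
    intro p
    rw [comp_aeval_apply]
    exact aeval_id_sub_mem hΔΓ p
  have hfI : ∀ p ∈ I1, aeval Δ p ∈ I2 := by
    intro p hp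
    obtain ⟨a, ha, b, hb, rfl⟩ := Submodule.mem_sup.mp hp
    rw [map_add]
    exact Ideal.add_mem _ (Ideal.mem_sup_left (aeval_span_range Ψ ha))
      (Ideal.mem_sup_right (aeval_mem_pow hΔm hb))
  have hgI : ∀ p ∈ I2, aeval Γ p ∈ I1 := by
    intro p hp
    obtain ⟨a, ha, b, hb, rfl⟩ := Submodule.mem_sup.mp hp
    rw [map_add]
    apply Ideal.add_mem
    · have h1 := aeval_span_range (g := Γ) (fun i => aeval Δ (Ψ i)) ha
      refine Ideal.span_le.mpr ?_ h1
      rintro q ⟨i, rfl⟩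
      show aeval Γ (aeval Δ (Ψ i)) ∈ (I1 : Set (MvPolynomial (Fin n) ℂ))
      have : aeval Γ (aeval Δ (Ψ i)) = Ψ i + (aeval Γ (aeval Δ (Ψ i)) - Ψ i) := by ring
      rw [this]
      refine Ideal.add_mem _ (Ideal.mem_sup_left (Ideal.subset_span ⟨i, rfl⟩))
        (Ideal.mem_sup_right ?_)
      have := hGF (Ψ i)
      simpa using this
    · exact Ideal.mem_sup_right (aeval_mem_pow hΓm hb)
  let F : (MvPolynomial (Fin n) ℂ ⧸ I1) →ₐ[ℂ] MvPolynomial (Fin n) ℂ ⧸ I2 :=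
    Ideal.Quotient.liftₐ I1 ((Ideal.Quotient.mkₐ ℂ I2).comp
      (aeval Δ : MvPolynomial (Fin n) ℂ →ₐ[ℂ] MvPolynomial (Fin n) ℂ)) (by
        intro a ha
        simp only [AlgHom.comp_apply, Ideal.Quotient.mkₐ_eq_mk]
        rw [Ideal.Quotient.eq_zero_iff_mem]
        exact hfI a ha)
  let G : (MvPolynomial (Fin n) ℂ ⧸ I2) →ₐ[ℂ] MvPolynomial (Fin n) ℂ ⧸ I1 :=
    Ideal.Quotient.liftₐ I2 ((Ideal.Quotient.mkₐ ℂ I1).comp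
      (aeval Γ : MvPolynomial (Fin n) ℂ →ₐ[ℂ] MvPolynomial (Fin n) ℂ)) (by
        intro a ha
        simp only [AlgHom.comp_apply, Ideal.Quotient.mkₐ_eq_mk]
        rw [Ideal.Quotient.eq_zero_iff_mem]
        exact hgI a ha)
  have hFapp : ∀ p, F (Ideal.Quotient.mk I1 p) = Ideal.Quotient.mk I2 (aeval Δ p) := by
    intro p
    simp [F, Ideal.Quotient.liftₐ_apply, Ideal.Quotient.mkₐ_eq_mk, Ideal.Quotient.lift_mk]
    rfl
  have hGapp : ∀ p, G (Ideal.Quotient.mk I2 p) = Ideal.Quotient.mk I1 (aeval Γ p) := by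
    intro p
    simp [G, Ideal.Quotient.liftₐ_apply, Ideal.Quotient.mkₐ_eq_mk, Ideal.Quotient.lift_mk]
    rfl
  refine ⟨AlgEquiv.ofAlgHom F G ?_ ?_⟩
  · apply Ideal.Quotient.algHom_ext
    apply AlgHom.ext
    intro p
    simp only [AlgHom.comp_apply, Ideal.Quotient.mkₐ_eq_mk, AlgHom.id_apply]
    rw [hGapp, hFapp, Ideal.Quotient.mk_eq_mk_iff_sub_mem]
    exact Ideal.mem_sup_right (hFG p)
  · apply Ideal.Quotient.algHom_ext
    apply AlgHom.ext
    intro p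
    simp only [AlgHom.comp_apply, Ideal.Quotient.mkₐ_eq_mk, AlgHom.id_apply]
    rw [hFapp, hGapp, Ideal.Quotient.mk_eq_mk_iff_sub_mem]
    exact Ideal.mem_sup_right (hGF p)

lemma target_ideal_eq {n k d : ℕ} (Φ : Fin k → MvPolynomial (Fin n) ℂ)
    (hΦ : ∀ i, Φ i ∈ mIdeal (Fin n))
    {Δ' : Fin k → MvPolynomial (Fin k) ℂ}
    (h0 : ∀ j, constantCoeff (Δ' j) = 0) (hlin : IsUnit (linearPart Δ')) :
    Ideal.span (Set.range fun j => aeval Φ (Δ' j)) ⊔ mIdeal (Fin n) ^ (d+1)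
      = Ideal.span (Set.range Φ) ⊔ mIdeal (Fin n) ^ (d+1) := by
  obtain ⟨Γ', hΓ'm, hleft, _⟩ := exists_full_inverse_jet h0 hlin (d+1)
  apply le_antisymm
  · apply sup_le
    · rw [Ideal.span_le]
      rintro q ⟨j, rfl⟩
      apply Ideal.mem_sup_left
      have hΔ'm : Δ' j ∈ mIdeal (Fin k) := mem_m_of_constantCoeff (h0 j)
      have := aeval_mem_pow (r := 1) (I := Ideal.span (Set.range Φ))
        (g := Φ) (fun i => Ideal.subset_span ⟨i, rfl⟩) (p := Δ' j) (by simpa using hΔ'm)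
      simpa using this
    · exact le_sup_right
  · apply sup_le
    · rw [Ideal.span_le]
      rintro q ⟨i, rfl⟩
      show Φ i ∈ ((Ideal.span (Set.range fun j => aeval Φ (Δ' j)) ⊔ mIdeal (Fin n) ^ (d+1) : Ideal (MvPolynomial (Fin n) ℂ)) : Set (MvPolynomial (Fin n) ℂ))
      have key : Φ i = aeval (fun j => aeval Φ (Δ' j)) (Γ' i)
          - aeval Φ (aeval Δ' (Γ' i) - X i) := by
        rw [← comp_aeval_apply, map_sub, aeval_X]
        ring
      rw [key]
      apply Ideal.sub_mem
      · apply Ideal.mem_sup_left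
        have := aeval_mem_pow (r := 1) (I := Ideal.span (Set.range fun j => aeval Φ (Δ' j)))
          (g := fun j => aeval Φ (Δ' j)) (fun j => Ideal.subset_span ⟨j, rfl⟩)
          (p := Γ' i) (by simpa using hΓ'm i)
        simpa using this
      · exact Ideal.mem_sup_right (aeval_mem_pow (I := mIdeal (Fin n)) hΦ (hleft i))
    · exact le_sup_right


/-- The local algebra `A_Ψ` is invariant under the left-right action of
`Diff_d^n × Diff_d^k`: if `Ψ''` is obtained from `Ψ` by reparametrizing the source by
`Δ ∈ Diff_d^n` and the target by `Δ' ∈ Diff_d^k`, then the quotient rings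
`MvPolynomial (Fin n) ℂ / (I⟨Ψ⟩ ⊔ m_n^(d+1))` and
`MvPolynomial (Fin n) ℂ / (I⟨Ψ''⟩ ⊔ m_n^(d+1))` are isomorphic `ℂ`-algebras.
In particular each contact singularity `Θ_A` is a left-right invariant subset of
`J_d^{n,k}`. -/
theorem local_algebra_left_right_invariant (d n k : ℕ)
    (Ψ : Fin k → MvPolynomial (Fin n) ℂ)
    (hΨ0 : ∀ i, constantCoeff (Ψ i) = 0)
    (Δ : Fin n → MvPolynomial (Fin n) ℂ)
    (hΔ0 : ∀ i, constantCoeff (Δ i) = 0)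
    (hΔlin : IsUnit (linearPart Δ))
    (Δ' : Fin k → MvPolynomial (Fin k) ℂ)
    (hΔ'0 : ∀ j, constantCoeff (Δ' j) = 0)
    (hΔ'lin : IsUnit (linearPart Δ'))
    (Ψ'' : Fin k → MvPolynomial (Fin n) ℂ)
    (hΨ'' : Ψ'' = fun j => aeval (fun i => aeval Δ (Ψ i)) (Δ' j)) :
    Nonempty
      ((MvPolynomial (Fin n) ℂ ⧸ (Ideal.span (Set.range Ψ) ⊔ varIdeal n ^ (d + 1)))
        ≃ₐ[ℂ]
       (MvPolynomial (Fin n) ℂ ⧸ (Ideal.span (Set.range Ψ'') ⊔ varIdeal n ^ (d + 1)))) := by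
  subst hΨ''
  rw [varIdeal_eq]
  have hΨm : ∀ i, Ψ i ∈ mIdeal (Fin n) := fun i => mem_m_of_constantCoeff (hΨ0 i)
  set Φ : Fin k → MvPolynomial (Fin n) ℂ := fun i => aeval Δ (Ψ i) with hΦdef
  have hΦm : ∀ i, Φ i ∈ mIdeal (Fin n) := by
    intro i
    have := aeval_mem_pow (r := 1) (I := mIdeal (Fin n))
      (fun j => mem_m_of_constantCoeff (hΔ0 j)) (p := Ψ i) (by simpa using hΨm i)
    simpa [Φ] using this
  obtain ⟨e1⟩ := source_quot_iso (d := d) Ψ hΨm hΔ0 hΔlin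
  have heq := target_ideal_eq (d := d) Φ hΦm hΔ'0 hΔ'lin
  exact ⟨e1.trans (Ideal.quotientEquivAlgOfEq ℂ heq.symm)⟩
end

section
/- Let A be a finite-dimensional commutative non-unital ℂ-algebra that is nilpotent with A^(d+1) = 0 (every product of d+1 elements of A vanishes), and let A² denote the ℂ-linear span of all products a·b with a, b ∈ A. Let n be a natural number with n ≥ dim_ℂ(A / A²). Then there exists k₀ such that for every k ≥ k₀ there exists a tuple f : Fin k → MvPolynomial (Fin n) ℂ of polynomials with zero constant coefficient such that A is isomorphic, as a non-unital ℂ-algebra, to the local algebra A_Ψ = m_n / (Ideal.span (Set.range f) ⊔ m_n^(d+1)), i.e. to the non-unital algebra of elements with zero constant term in the quotient ring MvPolynomial (Fin n) ℂ / (Ideal.span (Set.range f) ⊔ m_n^(d+1)). In other words, the contact singularity Θ_A^{n,k} ⊆ J_d^{n,k} is non-empty for n ≥ dim(A/A²) and k sufficiently large. -/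
open MvPolynomial

/-- The local algebra associated to a tuple `f` of polynomials with zero constant
coefficient: the non-unital subalgebra of elements with zero constant term (the
non-unital subalgebra generated by the images of the variables) in the quotient ring
`MvPolynomial (Fin n) ℂ ⧸ (Ideal.span (Set.range f) ⊔ m_n ^ (d + 1))`. -/
noncomputable def localAlgebra {n k : ℕ} (d : ℕ) (f : Fin k → MvPolynomial (Fin n) ℂ) :
    NonUnitalSubalgebra ℂ
      (MvPolynomial (Fin n) ℂ ⧸ (Ideal.span (Set.range f) ⊔ varIdeal n ^ (d + 1))) :=
  NonUnitalAlgebra.adjoin ℂ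
    (Set.range fun i =>
      Ideal.Quotient.mk (Ideal.span (Set.range f) ⊔ varIdeal n ^ (d + 1)) (X i))

section Aux

variable {A : Type} [NonUnitalCommRing A] [Module ℂ A] [SMulCommClass ℂ A A]
  [IsScalarTower ℂ A A]

/-- Span of pairwise products of two submodules. -/
noncomputable def mprod (M N : Submodule ℂ A) : Submodule ℂ A :=
  Submodule.span ℂ {x | ∃ a ∈ M, ∃ b ∈ N, x = a * b}

lemma mprod_le {M N P : Submodule ℂ A} :
    mprod M N ≤ P ↔ ∀ a ∈ M, ∀ b ∈ N, a * b ∈ P := by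
  rw [mprod, Submodule.span_le]
  constructor
  · intro h a ha b hb; exact h ⟨a, ha, b, hb, rfl⟩
  · rintro h x ⟨a, ha, b, hb, rfl⟩; exact h a ha b hb

lemma mul_mem_mprod {M N : Submodule ℂ A} {a b : A} (ha : a ∈ M) (hb : b ∈ N) :
    a * b ∈ mprod M N := Submodule.subset_span ⟨a, ha, b, hb, rfl⟩

lemma mprod_mono {M M' N N' : Submodule ℂ A} (h1 : M ≤ M') (h2 : N ≤ N') :
    mprod M N ≤ mprod M' N' := by
  rw [mprod_le]; intro a ha b hb; exact mul_mem_mprod (h1 ha) (h2 hb)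

lemma mprod_sup_le {M N P : Submodule ℂ A} :
    mprod (M ⊔ N) P ≤ mprod M P ⊔ mprod N P := by
  rw [mprod_le]; intro a ha b hb
  obtain ⟨m, hm, p, hp, rfl⟩ := Submodule.mem_sup.mp ha
  rw [add_mul]
  exact add_mem (Submodule.mem_sup_left (mul_mem_mprod hm hb))
    (Submodule.mem_sup_right (mul_mem_mprod hp hb))

lemma mprod_sup_le' {M N P : Submodule ℂ A} :
    mprod M (N ⊔ P) ≤ mprod M N ⊔ mprod M P := by
  rw [mprod_le]; intro a ha b hb
  obtain ⟨m, hm, p, hp, rfl⟩ := Submodule.mem_sup.mp hb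
  rw [mul_add]
  exact add_mem (Submodule.mem_sup_left (mul_mem_mprod ha hm))
    (Submodule.mem_sup_right (mul_mem_mprod ha hp))

lemma mprod_right_assoc {M N P : Submodule ℂ A} :
    mprod M (mprod N P) ≤ mprod (mprod M N) P := by
  rw [mprod_le]
  intro a ha b hb
  induction hb using Submodule.span_induction with
  | mem x hx =>
      obtain ⟨u, hu, v, hv, rfl⟩ := hx
      rw [← mul_assoc]
      exact mul_mem_mprod (mul_mem_mprod ha hu) hv
  | zero => rw [mul_zero]; exact zero_mem _
  | add x y hx hy ihx ihy => rw [mul_add]; exact add_mem ihx ihy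
  | smul c x hx ih => rw [mul_smul_comm]; exact Submodule.smul_mem _ _ ih

/-- `Pw m` is the span of products of `m + 1` elements of `A`. -/
noncomputable def Pw : ℕ → Submodule ℂ A
  | 0 => ⊤
  | m + 1 => mprod (Pw m) ⊤

/-- `Tw s m` is the span of products of `m + 1` elements of `s`. -/
noncomputable def Tw (s : Set A) : ℕ → Submodule ℂ A
  | 0 => Submodule.span ℂ s
  | m + 1 => mprod (Tw s m) (Tw s 0)

lemma Pw_zero : Pw (A := A) 0 = ⊤ := by rw [Pw]

lemma Pw_succ (m : ℕ) : Pw (A := A) (m + 1) = mprod (Pw m) ⊤ := by rw [Pw]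

lemma Tw_zero (s : Set A) : Tw s 0 = Submodule.span ℂ s := by rw [Tw]

lemma Tw_succ (s : Set A) (m : ℕ) : Tw s (m + 1) = mprod (Tw s m) (Tw s 0) := by
  conv_lhs => rw [Tw]

lemma foldl_mul_zero (l : List A) : l.foldl (· * ·) 0 = 0 := by
  induction l with
  | nil => rfl
  | cons y l ih => simpa [zero_mul] using ih

lemma foldl_mul_add (x y : A) (l : List A) :
    l.foldl (· * ·) (x + y) = l.foldl (· * ·) x + l.foldl (· * ·) y := by
  induction l generalizing x y with
  | nil => rfl
  | cons z l ih => simpa [add_mul] using ih (x * z) (y * z)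

lemma foldl_mul_smul (c : ℂ) (x : A) (l : List A) :
    l.foldl (· * ·) (c • x) = c • l.foldl (· * ·) x := by
  induction l generalizing x with
  | nil => rfl
  | cons z l ih => simpa [smul_mul_assoc] using ih (x * z)

/-- Elements killed by any `m` further multiplications. -/
noncomputable def Kw (m : ℕ) : Submodule ℂ A where
  carrier := {x | ∀ l : List A, l.length = m → l.foldl (· * ·) x = 0}
  add_mem' := fun hx hy l hl => by
    rw [foldl_mul_add, hx l hl, hy l hl, add_zero]
  zero_mem' := fun l _ => foldl_mul_zero l
  smul_mem' := fun c x hx l hl => by rw [foldl_mul_smul, hx l hl, smul_zero]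

lemma mem_Kw_zero {x : A} (hx : x ∈ Kw 0) : x = 0 := hx [] rfl

lemma mul_mem_Kw {m : ℕ} {x : A} (hx : x ∈ Kw (m + 1)) (y : A) : x * y ∈ Kw m := by
  intro l hl
  have : (y :: l).foldl (· * ·) x = 0 := hx (y :: l) (by simp [hl])
  simpa using this

lemma Pw_le_Kw (d : ℕ)
    (hnil : ∀ (x : A) (l : List A), l.length = d → l.foldl (· * ·) x = 0) :
    ∀ j, Pw (A := A) j ≤ Kw (d - j) := by
  intro j
  induction j with
  | zero =>
      rw [Pw_zero]
      intro x _
      exact fun l hl => hnil x l hl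
  | succ j ih =>
      rw [Pw_succ, mprod_le]
      intro x hx y _
      rcases Nat.lt_or_ge j d with hj | hj
      · have h1 : d - j = (d - (j + 1)) + 1 := by omega
        rw [h1] at ih
        exact mul_mem_Kw (ih hx) y
      · have h0 : d - j = 0 := by omega
        rw [h0] at ih
        have hx0 : x = 0 := mem_Kw_zero (ih hx)
        rw [hx0, zero_mul]
        exact zero_mem _

lemma Pw_nil (d : ℕ)
    (hnil : ∀ (x : A) (l : List A), l.length = d → l.foldl (· * ·) x = 0) :
    ∀ x ∈ Pw (A := A) d, x = 0 := by
  intro x hx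
  have h := Pw_le_Kw d hnil d hx
  rw [Nat.sub_self] at h
  exact mem_Kw_zero h

lemma Tw_le_Pw (s : Set A) : ∀ m, Tw s m ≤ Pw m := by
  intro m
  induction m with
  | zero => rw [Pw_zero]; exact le_top
  | succ m ih => rw [Pw_succ, Tw_succ]; exact mprod_mono ih le_top

lemma Tw_le_adjoin (s : Set A) :
    ∀ m, Tw s m ≤ (NonUnitalAlgebra.adjoin ℂ s).toSubmodule := by
  have h0 : Tw s 0 ≤ (NonUnitalAlgebra.adjoin ℂ s).toSubmodule := by
    rw [Tw_zero]
    exact Submodule.span_le.mpr (NonUnitalAlgebra.subset_adjoin ℂ)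
  intro m
  induction m with
  | zero => exact h0
  | succ m ih =>
      rw [Tw_succ, mprod_le]
      intro x hx y hy
      have hx' : x ∈ NonUnitalAlgebra.adjoin ℂ s :=
        (NonUnitalSubalgebra.mem_toSubmodule _).mp (ih hx)
      have hy' : y ∈ NonUnitalAlgebra.adjoin ℂ s :=
        (NonUnitalSubalgebra.mem_toSubmodule _).mp (h0 hy)
      exact (NonUnitalSubalgebra.mem_toSubmodule _).mpr (mul_mem hx' hy')

lemma adjoin_eq_top_of_span (s : Set A)
    (hs : Submodule.span ℂ s ⊔ Submodule.span ℂ {x : A | ∃ u v : A, x = u * v} = ⊤)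
    (d : ℕ)
    (hnil : ∀ (x : A) (l : List A), l.length = d → l.foldl (· * ·) x = 0) :
    NonUnitalAlgebra.adjoin ℂ s = ⊤ := by
  have hPw1 : Pw (A := A) 1 = Submodule.span ℂ {x : A | ∃ u v : A, x = u * v} := by
    rw [Pw_succ, Pw_zero]
    unfold mprod
    congr 1
    ext x
    simp only [Set.mem_setOf_eq, Submodule.mem_top]
    constructor
    · rintro ⟨u, _, v, _, rfl⟩; exact ⟨u, v, rfl⟩
    · rintro ⟨u, v, rfl⟩; exact ⟨u, trivial, v, trivial, rfl⟩
  have hbase : (⊤ : Submodule ℂ A) ≤ Tw s 0 ⊔ Pw 1 := by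
    rw [hPw1, Tw_zero]; exact le_of_eq hs.symm
  have hstep : ∀ m, Pw (A := A) m ≤ Tw s m ⊔ Pw (m + 1) := by
    intro m
    induction m with
    | zero => rw [Pw_zero]; exact hbase
    | succ m ih =>
        have h1 : Pw (A := A) (m + 1) ≤ mprod (Tw s m) ⊤ ⊔ Pw (m + 2) := by
          calc Pw (A := A) (m + 1) = mprod (Pw m) ⊤ := Pw_succ m
            _ ≤ mprod (Tw s m ⊔ Pw (m + 1)) ⊤ := mprod_mono ih le_rfl
            _ ≤ mprod (Tw s m) ⊤ ⊔ mprod (Pw (m + 1)) ⊤ := mprod_sup_le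
            _ = mprod (Tw s m) ⊤ ⊔ Pw (m + 2) := by rw [Pw_succ (m + 1)]
        have h2 : mprod (Tw s m) ⊤ ≤ Tw s (m + 1) ⊔ Pw (m + 2) := by
          calc mprod (Tw s m) ⊤ ≤ mprod (Tw s m) (Tw s 0 ⊔ Pw 1) := mprod_mono le_rfl hbase
            _ ≤ mprod (Tw s m) (Tw s 0) ⊔ mprod (Tw s m) (Pw 1) := mprod_sup_le'
            _ ≤ Tw s (m + 1) ⊔ Pw (m + 2) := by
                refine sup_le_sup (le_of_eq (Tw_succ s m).symm) ?_
                calc mprod (Tw s m) (Pw 1) = mprod (Tw s m) (mprod ⊤ ⊤) := by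
                      rw [Pw_succ, Pw_zero]
                  _ ≤ mprod (mprod (Tw s m) ⊤) ⊤ := mprod_right_assoc
                  _ ≤ mprod (mprod (Pw m) ⊤) ⊤ :=
                      mprod_mono (mprod_mono (Tw_le_Pw s m) le_rfl) le_rfl
                  _ = Pw (m + 2) := by rw [Pw_succ (m + 1), Pw_succ m]
        calc Pw (A := A) (m + 1) ≤ mprod (Tw s m) ⊤ ⊔ Pw (m + 2) := h1
          _ ≤ (Tw s (m + 1) ⊔ Pw (m + 2)) ⊔ Pw (m + 2) := sup_le_sup h2 le_rfl
          _ = Tw s (m + 1) ⊔ Pw (m + 2) := by rw [sup_assoc, sup_idem]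
  have hmain : ∀ m, (⊤ : Submodule ℂ A) ≤
      (NonUnitalAlgebra.adjoin ℂ s).toSubmodule ⊔ Pw m := by
    intro m
    induction m with
    | zero => rw [Pw_zero]; exact le_sup_right
    | succ m ih =>
        calc (⊤ : Submodule ℂ A) ≤ (NonUnitalAlgebra.adjoin ℂ s).toSubmodule ⊔ Pw m := ih
          _ ≤ (NonUnitalAlgebra.adjoin ℂ s).toSubmodule ⊔ (Tw s m ⊔ Pw (m + 1)) :=
              sup_le_sup le_rfl (hstep m)
          _ ≤ (NonUnitalAlgebra.adjoin ℂ s).toSubmodule ⊔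
              ((NonUnitalAlgebra.adjoin ℂ s).toSubmodule ⊔ Pw (m + 1)) :=
              sup_le_sup le_rfl (sup_le_sup (Tw_le_adjoin s m) le_rfl)
          _ = (NonUnitalAlgebra.adjoin ℂ s).toSubmodule ⊔ Pw (m + 1) := by
              rw [← sup_assoc, sup_idem]
  rw [eq_top_iff]
  intro x _
  have hx : x ∈ (NonUnitalAlgebra.adjoin ℂ s).toSubmodule ⊔ Pw d := hmain d trivial
  obtain ⟨u, hu, v, hv, rfl⟩ := Submodule.mem_sup.mp hx
  rw [Pw_nil d hnil v hv, add_zero]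
  exact (NonUnitalSubalgebra.mem_toSubmodule _).mp hu

end Aux

set_option maxHeartbeats 1000000 in
set_option synthInstance.maxHeartbeats 1000000 in
/-- Helper: given an evaluation map with the right kernel whose variable images
generate `A`, build the isomorphism with the local algebra. -/
lemma exists_iso_localAlgebra {n k : ℕ} (d : ℕ) {A : Type} [NonUnitalCommRing A]
    [Module ℂ A] [SMulCommClass ℂ A A] [IsScalarTower ℂ A A]
    (f : Fin k → MvPolynomial (Fin n) ℂ) (a : Fin n → A)
    (Φ : MvPolynomial (Fin n) ℂ →ₐ[ℂ] Unitization ℂ A)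
    (hΦX : ∀ i, Φ (X i) = Unitization.inr (a i))
    (hadj : NonUnitalAlgebra.adjoin ℂ (Set.range a) = ⊤)
    (hker : Ideal.span (Set.range f) ⊔ varIdeal n ^ (d + 1) = RingHom.ker Φ) :
    ∃ e : A ≃ₗ[ℂ] localAlgebra (n := n) d f,
      ∀ x y : A, e (x * y) = e x * e y := by
  classical
  let Φbar : (MvPolynomial (Fin n) ℂ ⧸ (Ideal.span (Set.range f) ⊔ varIdeal n ^ (d + 1)))
      →ₐ[ℂ] Unitization ℂ A :=
    Ideal.Quotient.liftₐ _ Φ (fun p hp => by rw [hker] at hp; exact hp)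
  have hΦbar : ∀ p, Φbar (Ideal.Quotient.mk
      (Ideal.span (Set.range f) ⊔ varIdeal n ^ (d + 1)) p) = Φ p := by
    intro p
    rfl
  have hinj : ∀ q, Φbar q = 0 → q = 0 := by
    intro q hq
    obtain ⟨p, rfl⟩ := Ideal.Quotient.mk_surjective q
    rw [hΦbar] at hq
    rw [Ideal.Quotient.eq_zero_iff_mem, hker]
    exact hq
  have hfst0 : ∀ q ∈ localAlgebra (n := n) d f, (Φbar q).fst = 0 := by
    intro q hq
    induction hq using NonUnitalAlgebra.adjoin_induction with
    | mem x hx =>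
        obtain ⟨i, rfl⟩ := hx
        rw [hΦbar, hΦX, Unitization.fst_inr]
    | add x y hx hy ihx ihy => rw [map_add, Unitization.fst_add, ihx, ihy, add_zero]
    | zero => rw [map_zero, Unitization.fst_zero]
    | mul x y hx hy ihx ihy => rw [map_mul, Unitization.fst_mul, ihx, ihy, mul_zero]
    | smul c x hx ih => rw [map_smul, Unitization.fst_smul, ih, smul_zero]
  have hsurj : ∀ x : A, ∃ q, q ∈ localAlgebra (n := n) d f ∧
      Φbar q = Unitization.inr x := by
    intro x
    have hx : x ∈ NonUnitalAlgebra.adjoin ℂ (Set.range a) := by rw [hadj]; trivial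
    induction hx using NonUnitalAlgebra.adjoin_induction with
    | mem x hx =>
        obtain ⟨i, rfl⟩ := hx
        refine ⟨Ideal.Quotient.mk _ (X i),
          NonUnitalAlgebra.subset_adjoin ℂ ⟨i, rfl⟩, ?_⟩
        rw [hΦbar, hΦX]
    | add x y hx hy ihx ihy =>
        obtain ⟨q1, hq1, he1⟩ := ihx
        obtain ⟨q2, hq2, he2⟩ := ihy
        exact ⟨q1 + q2, add_mem hq1 hq2, by
          rw [map_add, he1, he2, ← Unitization.inr_add]⟩
    | zero =>
        refine ⟨0, zero_mem _, ?_⟩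
        rw [map_zero]
        exact (Unitization.inr_zero ℂ).symm
    | mul x y hx hy ihx ihy =>
        obtain ⟨q1, hq1, he1⟩ := ihx
        obtain ⟨q2, hq2, he2⟩ := ihy
        exact ⟨q1 * q2, mul_mem hq1 hq2, by
          rw [map_mul, he1, he2, ← Unitization.inr_mul]⟩
    | smul c x hx ih =>
        obtain ⟨q1, hq1, he1⟩ := ih
        exact ⟨c • q1, SMulMemClass.smul_mem c hq1, by
          rw [map_smul, he1, ← Unitization.inr_smul]⟩
  -- the linear map from the local algebra to `A`
  let e' : (localAlgebra (n := n) d f) →ₗ[ℂ] A :=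
    { toFun := fun q => (Φbar (q : MvPolynomial (Fin n) ℂ ⧸
        (Ideal.span (Set.range f) ⊔ varIdeal n ^ (d + 1)))).snd
      map_add' := fun x y => by
        show (Φbar ((x : MvPolynomial (Fin n) ℂ ⧸ _) + (y : MvPolynomial (Fin n) ℂ ⧸ _))).snd
          = _
        rw [map_add, Unitization.snd_add]
      map_smul' := fun c x => by
        show (Φbar (c • (x : MvPolynomial (Fin n) ℂ ⧸ _))).snd = _
        rw [map_smul, Unitization.snd_smul]
        rfl }
  have he'apply : ∀ q : localAlgebra (n := n) d f,
      e' q = (Φbar (q : MvPolynomial (Fin n) ℂ ⧸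
        (Ideal.span (Set.range f) ⊔ varIdeal n ^ (d + 1)))).snd := fun _ => rfl
  have he'mul : ∀ x y : localAlgebra (n := n) d f, e' (x * y) = e' x * e' y := by
    intro x y
    rw [he'apply, he'apply, he'apply]
    have hco : ((x * y : localAlgebra (n := n) d f) : MvPolynomial (Fin n) ℂ ⧸
        (Ideal.span (Set.range f) ⊔ varIdeal n ^ (d + 1)))
        = (x : MvPolynomial (Fin n) ℂ ⧸ _) * (y : MvPolynomial (Fin n) ℂ ⧸ _) := rfl
    rw [hco, map_mul, Unitization.snd_mul, hfst0 _ x.2, hfst0 _ y.2, zero_smul, zero_smul,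
      add_zero, zero_add]
  have he'inj : Function.Injective e' := by
    intro x y hxy
    have hsub : e' (x - y) = 0 := by
      have h1 : e' (x - y) = e' x - e' y := LinearMap.map_sub e' x y
      rw [h1, hxy, sub_self]
    rw [he'apply] at hsub
    have hzero : Φbar ((x - y : localAlgebra (n := n) d f) : MvPolynomial (Fin n) ℂ ⧸
        (Ideal.span (Set.range f) ⊔ varIdeal n ^ (d + 1))) = 0 := by
      refine Unitization.ext ?_ ?_
      · rw [hfst0 _ (x - y).2, Unitization.fst_zero]
      · rw [Unitization.snd_zero]; exact hsub
    have h0 : ((x - y : localAlgebra (n := n) d f) : MvPolynomial (Fin n) ℂ ⧸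
        (Ideal.span (Set.range f) ⊔ varIdeal n ^ (d + 1))) = 0 := hinj _ hzero
    have hxy0 : (x - y : localAlgebra (n := n) d f) = 0 := Subtype.ext h0
    exact sub_eq_zero.mp hxy0
  have he'surj : Function.Surjective e' := by
    intro x
    obtain ⟨q, hq, heq⟩ := hsurj x
    refine ⟨⟨q, hq⟩, ?_⟩
    rw [he'apply]
    show (Φbar q).snd = x
    rw [heq, Unitization.snd_inr]
  let g : (localAlgebra (n := n) d f) ≃ₗ[ℂ] A :=
    LinearEquiv.ofBijective e' ⟨he'inj, he'surj⟩
  have hg : ∀ q, g q = e' q := fun _ => rfl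
  refine ⟨g.symm, ?_⟩
  intro x y
  apply g.injective
  rw [g.apply_symm_apply, hg, he'mul]
  show x * y = e' (g.symm x) * e' (g.symm y)
  rw [← hg, ← hg, g.apply_symm_apply, g.apply_symm_apply]

set_option maxHeartbeats 1000000 in
/-- If `A` is a finite-dimensional commutative nilpotent non-unital `ℂ`-algebra with
`A ^ (d + 1) = 0` and `n ≥ dim_ℂ (A / A²)`, then for all sufficiently large `k` there
is a map-jet in `J_d^{n,k}` whose local algebra is isomorphic to `A` as a non-unital
`ℂ`-algebra: the contact singularity `Θ_A^{n,k}` is non-empty. -/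
theorem contact_singularity_nonempty (d : ℕ) (A : Type) [NonUnitalCommRing A]
    [Module ℂ A] [SMulCommClass ℂ A A] [IsScalarTower ℂ A A] [FiniteDimensional ℂ A]
    (hnil : ∀ (a : A) (l : List A), l.length = d → l.foldl (· * ·) a = 0)
    (n : ℕ)
    (hn : Module.finrank ℂ
        (A ⧸ Submodule.span ℂ {x : A | ∃ a b : A, x = a * b}) ≤ n) :
    ∃ k₀ : ℕ, ∀ k, k₀ ≤ k →
      ∃ f : Fin k → MvPolynomial (Fin n) ℂ,
        (∀ i, constantCoeff (f i) = 0) ∧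
        ∃ e : A ≃ₗ[ℂ] localAlgebra (n := n) d f,
          ∀ x y : A, e (x * y) = e x * e y := by
  classical
  set W : Submodule ℂ A := Submodule.span ℂ {x : A | ∃ a b : A, x = a * b} with hWdef
  set r : ℕ := Module.finrank ℂ (A ⧸ W) with hrdef
  have hrn : r ≤ n := hn
  let b : Module.Basis (Fin r) ℂ (A ⧸ W) := Module.finBasis ℂ (A ⧸ W)
  let a : Fin n → A := fun i =>
    if h : (i : ℕ) < r then Function.surjInv (Submodule.mkQ_surjective W) (b ⟨i, h⟩) else 0
  have key : ∀ (i : Fin n) (h : (i : ℕ) < r),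
      a i = Function.surjInv (Submodule.mkQ_surjective W) (b ⟨(i : ℕ), h⟩) := by
    intro i h
    show (if h' : (i : ℕ) < r then _ else 0) = _
    rw [dif_pos h]
  -- the generators span `A` modulo `W`
  have hmka : ∀ j : Fin r, W.mkQ (a ⟨(j : ℕ), lt_of_lt_of_le j.2 hrn⟩) = b j := by
    intro j
    rw [key ⟨(j : ℕ), lt_of_lt_of_le j.2 hrn⟩ j.2,
      Function.surjInv_eq (Submodule.mkQ_surjective W)]
  have hspan : Submodule.span ℂ (Set.range a) ⊔ W = ⊤ := by
    rw [sup_comm, ← Submodule.map_mkQ_eq_top, Submodule.map_span, eq_top_iff,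
      ← b.span_eq]
    refine Submodule.span_le.mpr ?_
    rintro x ⟨j, rfl⟩
    exact Submodule.subset_span ⟨a ⟨(j : ℕ), lt_of_lt_of_le j.2 hrn⟩, ⟨_, rfl⟩, hmka j⟩
  have hadj : NonUnitalAlgebra.adjoin ℂ (Set.range a) = ⊤ :=
    adjoin_eq_top_of_span _ hspan d hnil
  -- the evaluation map into the unitization
  let Φ : MvPolynomial (Fin n) ℂ →ₐ[ℂ] Unitization ℂ A :=
    MvPolynomial.aeval (fun i => Unitization.inr (a i))
  have hΦX : ∀ i, Φ (X i) = Unitization.inr (a i) := fun i =>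
    MvPolynomial.aeval_X _ i
  have hΦC : ∀ c : ℂ, Φ (C c) = algebraMap ℂ (Unitization ℂ A) c := fun c =>
    MvPolynomial.aeval_C _ c
  have hfst : ∀ p : MvPolynomial (Fin n) ℂ, (Φ p).fst = constantCoeff p := by
    intro p
    induction p using MvPolynomial.induction_on with
    | C c =>
        rw [hΦC, constantCoeff_C, Unitization.algebraMap_eq_inl, Unitization.fst_inl]
    | add p q hp hq => rw [map_add, Unitization.fst_add, hp, hq, map_add]
    | mul_X p i hp =>
        rw [map_mul, Unitization.fst_mul, hΦX, Unitization.fst_inr, mul_zero, map_mul]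
        have : constantCoeff (X i : MvPolynomial (Fin n) ℂ) = 0 := by simp
        rw [this, mul_zero]
  set J : Ideal (MvPolynomial (Fin n) ℂ) := RingHom.ker Φ with hJdef
  have hccJ : ∀ p ∈ J, constantCoeff p = 0 := by
    intro p hp
    have h0 : Φ p = 0 := hp
    rw [← hfst, h0, Unitization.fst_zero]
  have hccvar : ∀ p ∈ varIdeal n, constantCoeff p = 0 := by
    intro p hp
    induction hp using Submodule.span_induction with
    | mem x hx =>
        obtain ⟨i, rfl⟩ := hx
        simp
    | zero => exact map_zero _
    | add x y hx hy ihx ihy => rw [map_add, ihx, ihy, add_zero]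
    | smul c x hx ih => rw [smul_eq_mul, map_mul, ih, mul_zero]
  -- `Φ` maps `varIdeal ^ (m+1)` into `inr (Pw m)`
  have hΦpow : ∀ (m : ℕ), ∀ p ∈ varIdeal n ^ (m + 1),
      Φ p ∈ Submodule.map (Unitization.inrHom ℂ ℂ A) (Pw m) := by
    intro m
    induction m with
    | zero =>
        intro p hp
        rw [pow_one] at hp
        refine ⟨(Φ p).snd, by rw [Pw_zero]; trivial, ?_⟩
        show Unitization.inr (Φ p).snd = Φ p
        refine Unitization.ext ?_ ?_
        · rw [Unitization.fst_inr, hfst, hccvar p hp]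
        · rw [Unitization.snd_inr]
    | succ m ih =>
        intro p hp
        rw [pow_succ] at hp
        refine Submodule.mul_induction_on hp ?_ ?_
        · intro q hq rr hrr
          obtain ⟨u, hu, hequ⟩ := ih q hq
          have hrr0 : (Φ rr).fst = 0 := by rw [hfst, hccvar rr hrr]
          have heqv : Unitization.inr (Φ rr).snd = Φ rr := by
            refine Unitization.ext ?_ ?_
            · rw [Unitization.fst_inr, hrr0]
            · rw [Unitization.snd_inr]
          refine ⟨u * (Φ rr).snd, by rw [Pw_succ]; exact mul_mem_mprod hu trivial, ?_⟩
          show Unitization.inr (u * (Φ rr).snd) = Φ (q * rr)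
          rw [map_mul, Unitization.inr_mul]
          show (Unitization.inrHom ℂ ℂ A u) * Unitization.inr (Φ rr).snd = _
          rw [hequ, heqv]
        · intro x y ihx ihy
          rw [map_add]
          exact add_mem ihx ihy
  have hpowJ : varIdeal n ^ (d + 1) ≤ J := by
    intro p hp
    obtain ⟨u, hu, hequ⟩ := hΦpow d p hp
    have hu0 : u = 0 := Pw_nil d hnil u hu
    show Φ p = 0
    rw [← hequ, hu0, map_zero]
  -- generators of the kernel
  obtain ⟨s, hsJ⟩ : J.FG := IsNoetherian.noetherian J
  refine ⟨s.toList.length, fun k hk => ?_⟩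
  let L : List (MvPolynomial (Fin n) ℂ) := s.toList
  have hk' : L.length ≤ k := hk
  let f : Fin k → MvPolynomial (Fin n) ℂ := fun i =>
    if h : (i : ℕ) < L.length then L.get ⟨i, h⟩ else 0
  have hfval : ∀ (i : Fin k) (h : (i : ℕ) < L.length), f i = L.get ⟨(i : ℕ), h⟩ := by
    intro i h
    show (if h' : (i : ℕ) < L.length then _ else 0) = _
    rw [dif_pos h]
  have hfval0 : ∀ (i : Fin k), ¬ ((i : ℕ) < L.length) → f i = 0 := by
    intro i h
    show (if h' : (i : ℕ) < L.length then _ else 0) = 0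
    rw [dif_neg h]
  have hfJ : ∀ i, f i ∈ J := by
    intro i
    by_cases h : (i : ℕ) < L.length
    · rw [hfval i h, ← hsJ]
      refine Ideal.subset_span ?_
      have hmem : L.get ⟨(i : ℕ), h⟩ ∈ L := L.get_mem _
      rwa [Finset.mem_toList] at hmem
    · rw [hfval0 i h]
      exact zero_mem J
  have hccf : ∀ i, constantCoeff (f i) = 0 := fun i => hccJ _ (hfJ i)
  have hspanf : Ideal.span (Set.range f) = J := by
    refine le_antisymm (Ideal.span_le.mpr ?_) ?_
    · rintro x ⟨i, rfl⟩; exact hfJ i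
    · rw [← hsJ]
      refine Ideal.span_le.mpr ?_
      intro x hx
      have hxL : x ∈ L := by rwa [Finset.mem_toList]
      obtain ⟨jj, hget⟩ := List.mem_iff_get.mp hxL
      have hjk : (jj : ℕ) < k := lt_of_lt_of_le jj.2 hk'
      have hfx : f ⟨(jj : ℕ), hjk⟩ = x := by
        rw [hfval ⟨(jj : ℕ), hjk⟩ jj.2, ← hget]
      exact Ideal.subset_span ⟨⟨(jj : ℕ), hjk⟩, hfx⟩
  have hker : Ideal.span (Set.range f) ⊔ varIdeal n ^ (d + 1) = RingHom.ker Φ := by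
    rw [hspanf]
    exact sup_eq_left.mpr hpowJ
  obtain ⟨e, he⟩ := exists_iso_localAlgebra d f a Φ hΦX hadj hker
  exact ⟨f, hccf, e, he⟩
end
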